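/- arXiv:2210.03011 — 3 statements merged into one kernel-verified Lean document; each statement's English description precedes it below -/
import Mathlib

section
/- Let (Ω, P) be a probability space, let C⁰ ⊆ C and S be measurable sets with p := P(C) > 0, let α ∈ (0,1] with P(C⁰) ≥ α·p, and set R := P(Sᶜ). Let E be a real Hilbert space, r > 0, δ ∈ [0, r], and let g : Ω → E be Bochner integrable with ‖g(ω)‖ ≤ r for all ω. Let x ∈ E with ‖x‖ = r satisfy ⟪x, g(ω′)⟫ ≥ r² − r·δ for all ω′ ∈ C⁰ ∩ S. Then ⟪x, p⁻¹ · ∫_C g dP⟫ ≥ (α − R/p)·(r² − r·δ) − r²·(1 − α + R/p). -/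
open MeasureTheory
open scoped RealInnerProductSpace

theorem stmt_4 {Ω : Type*} [MeasurableSpace Ω] (P : Measure Ω) [IsProbabilityMeasure P]
    (C C0 S : Set Ω)
    (hCmeas : MeasurableSet C) (hC0meas : MeasurableSet C0) (hSmeas : MeasurableSet S)
    (hC0sub : C0 ⊆ C)
    (p : ℝ) (hp : p = (P C).toReal) (hp0 : 0 < p)
    (α : ℝ) (hα0 : 0 < α) (hα1 : α ≤ 1)
    (hC0big : (P C0).toReal ≥ α * p)
    (R : ℝ) (hR : R = (P Sᶜ).toReal)
    {E : Type*} [NormedAddCommGroup E] [InnerProductSpace ℝ E] [CompleteSpace E]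
    (r δ : ℝ) (hr : 0 < r) (hδ0 : 0 ≤ δ) (hδr : δ ≤ r)
    (g : Ω → E) (hg : Integrable g P) (hgbd : ∀ ω, ‖g ω‖ ≤ r)
    (x : E) (hx : ‖x‖ = r)
    (hxg : ∀ ω' ∈ C0 ∩ S, ⟪x, g ω'⟫ ≥ r^2 - r * δ) :
    ⟪x, p⁻¹ • ∫ ω in C, g ω ∂P⟫ ≥ (α - R / p) * (r^2 - r * δ) - r^2 * (1 - α + R / p) := by
  set A : Set Ω := C0 ∩ S with hA
  have hAmeas : MeasurableSet A := hC0meas.inter hSmeas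
  have hAC : A ⊆ C := fun ω hω => hC0sub hω.1
  have hfint : Integrable (fun ω => ⟪x, g ω⟫) P := hg.const_inner x
  -- measure facts
  have hfin : ∀ T : Set Ω, P T ≠ ⊤ := fun T => (measure_lt_top P T).ne
  have hmA : (P A).toReal ≥ α * p - R := by
    have hsub : C0 ⊆ A ∪ Sᶜ := by
      intro ω hω
      by_cases hωS : ω ∈ S
      · exact Or.inl ⟨hω, hωS⟩
      · exact Or.inr hωS
    have h1 : P C0 ≤ P A + P Sᶜ := (measure_mono hsub).trans (measure_union_le _ _)
    have h2 : (P C0).toReal ≤ (P A).toReal + (P Sᶜ).toReal := by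
      rw [← ENNReal.toReal_add (hfin A) (hfin Sᶜ)]
      exact ENNReal.toReal_mono (by simp [ENNReal.add_ne_top, hfin]) h1
    rw [hR] at *
    linarith [hC0big]
  have hmCA : (P (C \ A)).toReal = p - (P A).toReal := by
    rw [hp, measure_diff hAC hAmeas.nullMeasurableSet (hfin A),
      ENNReal.toReal_sub_of_le (measure_mono hAC) (hfin C)]
  -- split the integral
  have hsplit : ∫ ω in C, ⟪x, g ω⟫ ∂P
      = (∫ ω in A, ⟪x, g ω⟫ ∂P) + ∫ ω in C \ A, ⟪x, g ω⟫ ∂P := by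
    rw [← setIntegral_union (Set.disjoint_sdiff_right) (hCmeas.diff hAmeas)
      hfint.integrableOn hfint.integrableOn, Set.union_diff_cancel hAC]
  have hIA : ∫ ω in A, ⟪x, g ω⟫ ∂P ≥ (r^2 - r * δ) * (P A).toReal :=
    setIntegral_ge_of_const_le_real hAmeas (hfin A) (fun ω hω => hxg ω hω) hfint.integrableOn
  have hbd : ∀ ω, |⟪x, g ω⟫| ≤ r^2 := by
    intro ω
    calc |⟪x, g ω⟫| ≤ ‖x‖ * ‖g ω‖ := abs_real_inner_le_norm x (g ω)
      _ ≤ r * r := by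
          rw [hx]; exact mul_le_mul_of_nonneg_left (hgbd ω) hr.le
      _ = r^2 := (sq r).symm
  have hICA : ∫ ω in C \ A, ⟪x, g ω⟫ ∂P ≥ -(r^2) * (P (C \ A)).toReal := by
    have := norm_setIntegral_le_of_norm_le_const (μ := P) (s := C \ A)
      (f := fun ω => ⟪x, g ω⟫) (C := r^2)
      ((measure_lt_top P _))
      (fun ω _ => by simpa [Real.norm_eq_abs] using hbd ω)
    rw [Real.norm_eq_abs, abs_le, measureReal_def] at this
    linarith [this.1]
  have hIC : ∫ ω in C, ⟪x, g ω⟫ ∂P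
      ≥ (r^2 - r * δ) * (P A).toReal - r^2 * (p - (P A).toReal) := by
    rw [hsplit]
    have := hICA
    rw [hmCA] at this
    nlinarith [hIA]
  have hinner : ⟪x, p⁻¹ • ∫ ω in C, g ω ∂P⟫ = p⁻¹ * ∫ ω in C, ⟪x, g ω⟫ ∂P := by
    rw [real_inner_smul_right, integral_inner hg.integrableOn]
  rw [hinner]
  have hmA' : (P A).toReal ≥ α * p - R := hmA
  have hkey : p⁻¹ * ∫ ω in C, ⟪x, g ω⟫ ∂P
      ≥ p⁻¹ * ((r^2 - r * δ) * (P A).toReal - r^2 * (p - (P A).toReal)) := by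
    exact mul_le_mul_of_nonneg_left hIC (inv_nonneg.mpr hp0.le)
  refine le_trans ?_ hkey
  clear hAC hC0sub
  rw [ge_iff_le, div_eq_mul_inv, ← sub_nonneg] at *
  have h2r : 0 ≤ 2 * r^2 - r * δ := by nlinarith
  have hpinv : 0 < p⁻¹ := inv_pos.mpr hp0
  have hcalc : p⁻¹ * ((r^2 - r * δ) * (P A).toReal - r^2 * (p - (P A).toReal))
      - ((α - R * p⁻¹) * (r^2 - r * δ) - r^2 * (1 - α + R * p⁻¹))
      = p⁻¹ * (2 * r^2 - r * δ) * ((P A).toReal - (α * p - R)) := by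
    field_simp
    ring
  rw [hcalc]
  positivity
end

section
/- Let (Ω, P) be a probability space, let C⁰ ⊆ C and S be measurable sets with p := P(C) > 0, let α ∈ (0,1] with P(C⁰) ≥ α·p, and set R := P(Sᶜ). Let E be a real Hilbert space, r > 0, δ ∈ [0, r], and let g : Ω → E be Bochner integrable with ‖g(ω)‖ ≤ r for all ω. Let x ∈ E with ‖x‖ = r satisfy ⟪x, g(ω′)⟫ ≥ r² − r·δ for all ω′ ∈ C⁰ ∩ S. Then ⟪x, p⁻¹ · ∫_C g dP⟫ ≥ r²·(1 − (2(1 − α) + 2R/p + α·δ/r)). -/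
open MeasureTheory
open scoped RealInnerProductSpace

theorem stmt_5 {Ω : Type*} [MeasurableSpace Ω] (P : Measure Ω) [IsProbabilityMeasure P]
    (C C0 S : Set Ω)
    (hCmeas : MeasurableSet C) (hC0meas : MeasurableSet C0) (hSmeas : MeasurableSet S)
    (hC0sub : C0 ⊆ C)
    (p : ℝ) (hp : p = (P C).toReal) (hp0 : 0 < p)
    (α : ℝ) (hα0 : 0 < α) (hα1 : α ≤ 1)
    (hC0big : (P C0).toReal ≥ α * p)
    (R : ℝ) (hR : R = (P Sᶜ).toReal)
    {E : Type*} [NormedAddCommGroup E] [InnerProductSpace ℝ E] [CompleteSpace E]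
    (r δ : ℝ) (hr : 0 < r) (hδ0 : 0 ≤ δ) (hδr : δ ≤ r)
    (g : Ω → E) (hg : Integrable g P) (hgbd : ∀ ω, ‖g ω‖ ≤ r)
    (x : E) (hx : ‖x‖ = r)
    (hxg : ∀ ω' ∈ C0 ∩ S, ⟪x, g ω'⟫ ≥ r^2 - r * δ) :
    ⟪x, p⁻¹ • ∫ ω in C, g ω ∂P⟫ ≥ r^2 * (1 - (2 * (1 - α) + 2 * R / p + α * δ / r)) := by
  set G := C0 ∩ S with hGdef
  have hGmeas : MeasurableSet G := hC0meas.inter hSmeas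
  have hGsub : G ⊆ C := fun ω hω => hC0sub hω.1
  have hint : Integrable (fun ω => ⟪x, g ω⟫) P := hg.const_inner x
  -- rewrite inner product of integral
  have h1 : ⟪x, p⁻¹ • ∫ ω in C, g ω ∂P⟫ = p⁻¹ * ∫ ω in C, ⟪x, g ω⟫ ∂P := by
    rw [inner_smul_right, integral_inner hg.integrableOn x]
  rw [h1]
  -- pointwise lower bound everywhere
  have hlow : ∀ ω, -(r^2) ≤ ⟪x, g ω⟫ := by
    intro ω
    have h := abs_real_inner_le_norm x (g ω)
    have : ‖x‖ * ‖g ω‖ ≤ r^2 := by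
      rw [hx, sq]
      exact mul_le_mul_of_nonneg_left (hgbd ω) hr.le
    nlinarith [abs_nonneg (⟪x, g ω⟫ : ℝ), neg_abs_le (⟪x, g ω⟫ : ℝ)]
  -- split the integral
  have hsplit : (∫ ω in C ∩ G, ⟪x, g ω⟫ ∂P) + ∫ ω in C \ G, ⟪x, g ω⟫ ∂P
      = ∫ ω in C, ⟪x, g ω⟫ ∂P := integral_inter_add_diff hGmeas hint.integrableOn
  have hCG : C ∩ G = G := Set.inter_eq_self_of_subset_right hGsub
  set a := (P G).toReal with ha
  set b := (P (C \ G)).toReal with hb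
  have ha0 : 0 ≤ a := ENNReal.toReal_nonneg
  have hb0 : 0 ≤ b := ENNReal.toReal_nonneg
  have hR0 : 0 ≤ R := hR ▸ ENNReal.toReal_nonneg
  -- measure additivity: p = a + b
  have hab : p = a + b := by
    rw [hp, ha, hb, ← ENNReal.toReal_add (measure_ne_top P G) (measure_ne_top P (C \ G))]
    congr 1
    have h := measure_inter_add_diff (μ := P) C hGmeas
    rw [hCG] at h
    exact h.symm
  -- a ≥ α p - R
  have haR : α * p - R ≤ a := by
    have hsub : C0 ⊆ G ∪ Sᶜ := by
      intro ω hω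
      by_cases h : ω ∈ S
      · exact Or.inl ⟨hω, h⟩
      · exact Or.inr h
    have h2 : P C0 ≤ P G + P Sᶜ := (measure_mono hsub).trans (measure_union_le _ _)
    have h3 : (P C0).toReal ≤ a + R := by
      rw [ha, hR, ← ENNReal.toReal_add (measure_ne_top P G) (measure_ne_top P Sᶜ)]
      exact ENNReal.toReal_mono (by finiteness) h2
    linarith [hC0big]
  -- lower bound on the good part
  have hgood : (r^2 - r * δ) * a ≤ ∫ ω in C ∩ G, ⟪x, g ω⟫ ∂P := by
    rw [hCG]
    exact setIntegral_ge_of_const_le_real hGmeas (measure_ne_top P G)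
      (fun ω hω => hxg ω hω) hint.integrableOn
  -- lower bound on the bad part
  have hbad : (-(r^2)) * b ≤ ∫ ω in C \ G, ⟪x, g ω⟫ ∂P :=
    setIntegral_ge_of_const_le_real (hCmeas.diff hGmeas) (measure_ne_top P (C \ G))
      (fun ω _ => hlow ω) hint.integrableOn
  have hI : (r^2 - r * δ) * a + (-(r^2)) * b ≤ ∫ ω in C, ⟪x, g ω⟫ ∂P := by
    rw [← hsplit]; exact add_le_add hgood hbad
  rw [ge_iff_le, inv_mul_eq_div, le_div_iff₀ hp0]
  have hrne : r ≠ 0 := hr.ne'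
  have hpne : p ≠ 0 := hp0.ne'
  have key : r^2 * (1 - (2 * (1 - α) + 2 * R / p + α * δ / r)) * p
      ≤ (r^2 - r * δ) * a + (-(r^2)) * b := by
    have e1 : 2 * R / p * p = 2 * R := by field_simp
    have e2 : α * δ / r * r^2 = α * δ * r := by field_simp
    nlinarith [mul_le_mul_of_nonneg_left haR (by nlinarith : (0:ℝ) ≤ 2*r^2 - r*δ),
      mul_nonneg hδ0 hR0, mul_nonneg (mul_nonneg hr.le hδ0) hR0]
  exact key.trans hI
end

section
/- Let E be a real inner product space, let r > 0, ρ ≥ 0 and Δ ∈ ℝ, and let x, μ, ν ∈ E satisfy ‖x‖ = r, ‖μ‖ ≤ r, ‖ν‖ ≤ r and ‖ν‖² ≥ (1 − Δ)·r². If ⟪x, μ⟫ ≥ r²·(1 − ρ) and ⟪μ, ν⟫ < r²·(1 − ρ − √(2ρ) − Δ/2), then ‖x − μ‖ < ‖x − ν‖. -/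
open scoped RealInnerProductSpace

theorem stmt_6 {E : Type*} [NormedAddCommGroup E] [InnerProductSpace ℝ E]
    (r ρ Δ : ℝ) (hr : 0 < r) (hρ : 0 ≤ ρ) (x μ ν : E)
    (hx : ‖x‖ = r) (hμ : ‖μ‖ ≤ r) (hν : ‖ν‖ ≤ r) (hνΔ : ‖ν‖^2 ≥ (1 - Δ) * r^2)
    (hxμ : ⟪x, μ⟫ ≥ r^2 * (1 - ρ))
    (hμν : ⟪μ, ν⟫ < r^2 * (1 - ρ - Real.sqrt (2 * ρ) - Δ / 2)) :
    ‖x - μ‖ < ‖x - ν‖ := by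
  set s := Real.sqrt (2 * ρ) with hs_def
  have hs : 0 ≤ s := Real.sqrt_nonneg _
  have hs2 : s ^ 2 = 2 * ρ := Real.sq_sqrt (by linarith)
  have hμ2 : ‖μ‖ ^ 2 ≤ r ^ 2 := by nlinarith [norm_nonneg μ]
  have hxμ2 : ‖x - μ‖ ^ 2 = r ^ 2 + ‖μ‖ ^ 2 - 2 * ⟪x, μ⟫ := by
    rw [@norm_sub_sq_real, hx]; ring
  have hxν2 : ‖x - ν‖ ^ 2 = r ^ 2 + ‖ν‖ ^ 2 - 2 * ⟪x, ν⟫ := by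
    rw [@norm_sub_sq_real, hx]; ring
  have h1 : ‖x - μ‖ ^ 2 ≤ (r * s) ^ 2 := by
    rw [mul_pow, hs2]; nlinarith
  have h2 : ‖x - μ‖ ≤ r * s :=
    le_of_pow_le_pow_left₀ (by norm_num) (by positivity) h1
  have h3 : ⟪x - μ, ν⟫ ≤ ‖x - μ‖ * ‖ν‖ := real_inner_le_norm _ _
  have h4 : ⟪x - μ, ν⟫ = ⟪x, ν⟫ - ⟪μ, ν⟫ := by rw [inner_sub_left]
  have h5 : ‖x - μ‖ * ‖ν‖ ≤ (r * s) * r :=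
    mul_le_mul h2 hν (norm_nonneg _) (by positivity)
  have hinner : ⟪x, ν⟫ ≤ ⟪μ, ν⟫ + r * s * r := by
    rw [h4] at h3; linarith
  have hsq : ‖x - μ‖ ^ 2 < ‖x - ν‖ ^ 2 := by
    rw [hxμ2, hxν2]; nlinarith
  exact lt_of_pow_lt_pow_left₀ 2 (norm_nonneg _) hsq
end
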